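/- Let X be a hypergeometric random variable counting the successes in K draws without replacement from a population of size n containing n/4 successes, and let Y ~ Binomial(K, 1/4). Then the mean absolute deviation of X is at most that of Y: E[|X − E[X]|] ≤ E[|Y − E[Y]|]. -/

import Mathlib

open Finset

/-- Pairing product inequality. -/
lemma md_pairing (s K j : ℕ) (hj : j = K/4+1) (hK1 : 1 ≤ K) (hK : K ≤ 4*s) :
    (∏ i ∈ range j, (12*s-12*i)) * ∏ i ∈ range (K-j), (12*s-(4*i+4))
      ≤ ∏ r ∈ range K, (12*s-3*r) := by
  set r1 : ℕ → ℕ := fun i => if i = 0 then 0 else 4*i-1 with hr1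
  set r2 : ℕ → ℕ := fun i => (4*i+4)/3 with hr2
  have hA : (∏ i ∈ range j, (12*s-12*i)) ≤ ∏ r ∈ (range j).image r1, (12*s-3*r) := by
    rw [Finset.prod_image (by intro a _ b _ h; simp only [hr1] at h; split_ifs at h <;> omega)]
    exact Finset.prod_le_prod' (fun i _ => by simp only [hr1]; split_ifs <;> omega)
  have hB : (∏ i ∈ range (K-j), (12*s-(4*i+4))) ≤ ∏ r ∈ (range (K-j)).image r2, (12*s-3*r) := by
    rw [Finset.prod_image (by intro a _ b _ h; simp only [hr2] at h; omega)]
    exact Finset.prod_le_prod' (fun i _ => by simp only [hr2]; omega)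
  have hdisj : Disjoint ((range j).image r1) ((range (K-j)).image r2) := by
    rw [Finset.disjoint_left]
    rintro x hx1 hx2
    simp only [Finset.mem_image, Finset.mem_range] at hx1 hx2
    obtain ⟨a, ha, rfl⟩ := hx1
    obtain ⟨b, hb, hba⟩ := hx2
    simp only [hr1, hr2] at hba
    split_ifs at hba <;> omega
  have hsub : ((range j).image r1) ∪ ((range (K-j)).image r2) ⊆ range K := by
    intro x hx
    simp only [Finset.mem_union, Finset.mem_image, Finset.mem_range] at hx ⊢
    rcases hx with ⟨a, ha, rfl⟩ | ⟨b, hb, rfl⟩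
    · simp only [hr1]; split_ifs <;> omega
    · simp only [hr2]; omega
  calc (∏ i ∈ range j, (12*s-12*i)) * ∏ i ∈ range (K-j), (12*s-(4*i+4))
      ≤ (∏ r ∈ (range j).image r1, (12*s-3*r)) * ∏ r ∈ (range (K-j)).image r2, (12*s-3*r) :=
        Nat.mul_le_mul hA hB
    _ = ∏ r ∈ ((range j).image r1) ∪ ((range (K-j)).image r2), (12*s-3*r) :=
        (Finset.prod_union hdisj).symm
    _ ≤ ∏ r ∈ range K, (12*s-3*r) :=
        Finset.prod_le_prod_of_subset_of_one_le' hsub (fun r hr _ => by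
          simp only [Finset.mem_range] at hr; omega)


lemma md_chooseIneq (s K j : ℕ) (hs : 0 < s) (hj : j = K/4+1) (hK1 : 1 ≤ K) (hK : K ≤ 4*s) :
    Nat.choose s j * Nat.choose (3*s-1) (K-j) * 4^K
      ≤ 3^(K-j) * (Nat.choose K j * Nat.choose (4*s) K) := by
  have hjK : j ≤ K := by omega
  -- descFactorial form
  have main : Nat.descFactorial s j * Nat.descFactorial (3*s-1) (K-j) * 4^K
      ≤ 3^(K-j) * Nat.descFactorial (4*s) K := by
    have h3j : 0 < 3^j := Nat.pow_pos (by norm_num)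
    apply Nat.le_of_mul_le_mul_left _ h3j
    have lhs_eq : 3^j * (Nat.descFactorial s j * Nat.descFactorial (3*s-1) (K-j) * 4^K)
        = (∏ i ∈ range j, (12*s-12*i)) * ∏ i ∈ range (K-j), (12*s-(4*i+4)) := by
      have e4 : (4:ℕ)^K = 4^j * 4^(K-j) := by rw [← pow_add]; congr 1; omega
      rw [e4, Nat.descFactorial_eq_prod_range, Nat.descFactorial_eq_prod_range]
      have eA : (∏ i ∈ range j, (12*s-12*i)) = 12^j * ∏ i ∈ range j, (s-i) := by
        calc (∏ i ∈ range j, (12*s-12*i)) = ∏ i ∈ range j, (12*(s-i)) :=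
              Finset.prod_congr rfl (fun i _ => by omega)
          _ = (∏ _i ∈ range j, 12) * ∏ i ∈ range j, (s-i) := Finset.prod_mul_distrib
          _ = 12^j * ∏ i ∈ range j, (s-i) := by rw [Finset.prod_const, Finset.card_range]
      have eB : (∏ i ∈ range (K-j), (12*s-(4*i+4))) = 4^(K-j) * ∏ i ∈ range (K-j), (3*s-1-i) := by
        calc (∏ i ∈ range (K-j), (12*s-(4*i+4))) = ∏ i ∈ range (K-j), (4*(3*s-1-i)) :=
              Finset.prod_congr rfl (fun i _ => by omega)
          _ = (∏ _i ∈ range (K-j), 4) * ∏ i ∈ range (K-j), (3*s-1-i) := Finset.prod_mul_distrib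
          _ = 4^(K-j) * ∏ i ∈ range (K-j), (3*s-1-i) := by rw [Finset.prod_const, Finset.card_range]
      have e12 : (12:ℕ)^j = 3^j * 4^j := by rw [← mul_pow]; norm_num
      rw [eA, eB, e12]; ring
    have rhs_eq : 3^j * (3^(K-j) * Nat.descFactorial (4*s) K)
        = ∏ r ∈ range K, (12*s-3*r) := by
      rw [← mul_assoc, ← pow_add, Nat.descFactorial_eq_prod_range]
      have : j + (K-j) = K := by omega
      rw [this]
      calc 3^K * ∏ i ∈ range K, (4*s-i)
          = (∏ _i ∈ range K, 3) * ∏ i ∈ range K, (4*s-i) := by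
            rw [Finset.prod_const, Finset.card_range]
        _ = ∏ i ∈ range K, (3*(4*s-i)) := Finset.prod_mul_distrib.symm
        _ = ∏ r ∈ range K, (12*s-3*r) := Finset.prod_congr rfl (fun i _ => by omega)
    rw [lhs_eq, rhs_eq]
    exact md_pairing s K j hj hK1 hK
  -- convert
  have h1 : Nat.descFactorial s j = Nat.factorial j * Nat.choose s j :=
    Nat.descFactorial_eq_factorial_mul_choose _ _
  have h2 : Nat.descFactorial (3*s-1) (K-j) = Nat.factorial (K-j) * Nat.choose (3*s-1) (K-j) :=
    Nat.descFactorial_eq_factorial_mul_choose _ _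
  have h4 : Nat.descFactorial (4*s) K = Nat.factorial K * Nat.choose (4*s) K :=
    Nat.descFactorial_eq_factorial_mul_choose _ _
  have h5 : Nat.choose K j * Nat.factorial j * Nat.factorial (K-j) = Nat.factorial K :=
    Nat.choose_mul_factorial_mul_factorial hjK
  have hpos : 0 < Nat.factorial j * Nat.factorial (K-j) :=
    Nat.mul_pos (Nat.factorial_pos _) (Nat.factorial_pos _)
  rw [h1, h2, h4] at main
  refine Nat.le_of_mul_le_mul_right ?_ hpos
  calc (Nat.choose s j * Nat.choose (3*s-1) (K-j) * 4^K) * (Nat.factorial j * Nat.factorial (K-j))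
      = Nat.factorial j * Nat.choose s j * (Nat.factorial (K-j) * Nat.choose (3*s-1) (K-j)) * 4^K := by ring
    _ ≤ 3^(K-j) * (Nat.factorial K * Nat.choose (4*s) K) := main
    _ = (3^(K-j) * (Nat.choose K j * Nat.choose (4*s) K)) * (Nat.factorial j * Nat.factorial (K-j)) := by
        rw [← h5]; ring

/-- Cast of choose_succ_right_eq, valid unconditionally over ℝ. -/
lemma md_R1 (n j : ℕ) :
    ((n:ℝ) - j) * (Nat.choose n j) = (j+1) * (Nat.choose n (j+1)) := by
  rcases le_or_gt j n with h | h
  · have h1 := congrArg (Nat.cast : ℕ → ℝ) (Nat.choose_succ_right_eq n j)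
    push_cast [h] at h1
    linarith
  · rw [Nat.choose_eq_zero_of_lt h, Nat.choose_eq_zero_of_lt (by omega)]
    simp

/-- Key hypergeometric step identity over ℝ. -/
lemma md_key (s K j : ℕ) (hj : j + 1 ≤ K) :
    ((s:ℝ) - j) * ((K:ℝ) - j) * ((Nat.choose s j : ℝ) * (Nat.choose (3*s) (K-j) : ℝ))
      = ((j:ℝ)+1) * (3*(s:ℝ) - K + (j+1)) *
        ((Nat.choose s (j+1) : ℝ) * (Nat.choose (3*s) (K-(j+1)) : ℝ)) := by
  have h1 := md_R1 s j
  have h2 := md_R1 (3*s) (K-j-1)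
  have e1 : (K-j-1) + 1 = K - j := by omega
  rw [e1] at h2
  have e2 : ((K-j-1 : ℕ) : ℝ) = (K:ℝ) - j - 1 := by
    rw [Nat.sub_sub, Nat.cast_sub (by omega : j + 1 ≤ K)]
    push_cast; ring
  have e4 : K - (j+1) = K - j - 1 := by omega
  rw [e2] at h2
  rw [e4]
  push_cast at h1 h2 ⊢
  linear_combination ((K:ℝ) - j) * (Nat.choose (3*s) (K-j) : ℝ) * h1
    - ((j:ℝ)+1) * (Nat.choose s (j+1) : ℝ) * h2



lemma md_hstep (s K j : ℕ) (hs : 0 < s) (hj : j + 1 ≤ K) :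
    ((j:ℝ) * (3*(s:ℝ) - K + j) / (4*s)) * ((Nat.choose s j : ℝ) * (Nat.choose (3*s) (K-j) : ℝ))
      + ((K:ℝ)/4 - j) * ((Nat.choose s j : ℝ) * (Nat.choose (3*s) (K-j) : ℝ))
      = (((j:ℝ)+1) * (3*(s:ℝ) - K + (j+1)) / (4*s)) *
        ((Nat.choose s (j+1) : ℝ) * (Nat.choose (3*s) (K-(j+1)) : ℝ)) := by
  have hk := md_key s K j hj
  have hs' : (s:ℝ) ≠ 0 := Nat.cast_ne_zero.mpr hs.ne'
  field_simp
  linear_combination hk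

lemma md_htel (s K : ℕ) (hs : 0 < s) : ∀ t, t + 1 ≤ K →
    ∑ k ∈ range (t+1), ((Nat.choose s k : ℝ) * (Nat.choose (3*s) (K-k) : ℝ)) * ((K:ℝ)/4 - k)
      = (((t:ℝ)+1) * (3*(s:ℝ) - K + (t+1)) / (4*s)) *
        ((Nat.choose s (t+1) : ℝ) * (Nat.choose (3*s) (K-(t+1)) : ℝ)) := by
  intro t
  induction t with
  | zero =>
    intro h1
    have h := md_hstep s K 0 hs h1
    simpa using (by
      have := h
      simp at this ⊢
      linarith [this])
  | succ t ih =>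
    intro h2
    have ht1 : t + 1 ≤ K := by omega
    rw [Finset.sum_range_succ, ih ht1]
    have h := md_hstep s K (t+1) hs h2
    push_cast at h ⊢
    linarith [h]


lemma md_bstep (K j : ℕ) (hj : j + 1 ≤ K) :
    ((3/4:ℝ) * j) * ((Nat.choose K j : ℝ) * (1/4:ℝ)^j * (3/4:ℝ)^(K-j))
      + ((K:ℝ)/4 - j) * ((Nat.choose K j : ℝ) * (1/4:ℝ)^j * (3/4:ℝ)^(K-j))
      = (3/4:ℝ) * ((j:ℝ)+1) * ((Nat.choose K (j+1) : ℝ) * (1/4:ℝ)^(j+1) * (3/4:ℝ)^(K-(j+1))) := by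
  have h1 := md_R1 K j
  have e1 : K - j = (K - (j+1)) + 1 := by omega
  rw [e1, pow_succ]
  linear_combination ((1/4:ℝ)^j * (3/4:ℝ)^(K-(j+1)) * (3/16)) * h1

lemma md_btel (K : ℕ) : ∀ t, t + 1 ≤ K →
    ∑ k ∈ range (t+1), ((Nat.choose K k : ℝ) * (1/4:ℝ)^k * (3/4:ℝ)^(K-k)) * ((K:ℝ)/4 - k)
      = (3/4:ℝ) * ((t:ℝ)+1) * ((Nat.choose K (t+1) : ℝ) * (1/4:ℝ)^(t+1) * (3/4:ℝ)^(K-(t+1))) := by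
  intro t
  induction t with
  | zero =>
    intro h1
    have h := md_bstep K 0 h1
    rw [Finset.sum_range_one]
    norm_num at h ⊢
    linarith [h]
  | succ t ih =>
    intro h2
    have ht1 : t + 1 ≤ K := by omega
    rw [Finset.sum_range_succ, ih ht1]
    have h := md_bstep K (t+1) h2
    push_cast at h ⊢
    linarith [h]

lemma md_hsum (s K : ℕ) :
    ∑ k ∈ range (K+1), Nat.choose s k * Nat.choose (3*s) (K-k) = Nat.choose (4*s) K := by
  have h := Nat.add_choose_eq s (3*s) K
  rw [Finset.Nat.sum_antidiagonal_eq_sum_range_succ_mk] at h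
  rw [← h]; congr 1; omega

lemma md_hmean (s K : ℕ) (hs : 0 < s) (hK : 1 ≤ K) :
    ∑ k ∈ range (K+1), k * (Nat.choose s k * Nat.choose (3*s) (K-k))
      = s * Nat.choose (4*s-1) (K-1) := by
  rw [Finset.sum_range_succ']
  simp only [Nat.zero_mul, Nat.add_zero, zero_mul, add_zero]
  have step : ∀ k : ℕ, (k+1) * (Nat.choose s (k+1) * Nat.choose (3*s) (K-(k+1)))
      = s * (Nat.choose (s-1) k * Nat.choose (3*s) ((K-1)-k)) := by
    intro k
    have h1 : s * Nat.choose (s-1) k = Nat.choose s (k+1) * (k+1) := by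
      have h0 := Nat.add_one_mul_choose_eq (s-1) k
      have hs1 : s-1+1 = s := by omega
      rw [hs1] at h0
      simpa [Nat.succ_eq_add_one] using h0
    have e : K - (k+1) = (K-1) - k := by omega
    rw [e]
    calc (k+1) * (Nat.choose s (k+1) * Nat.choose (3*s) ((K-1)-k))
        = (Nat.choose s (k+1) * (k+1)) * Nat.choose (3*s) ((K-1)-k) := by ring
      _ = (s * Nat.choose (s-1) k) * Nat.choose (3*s) ((K-1)-k) := by rw [h1]
      _ = s * (Nat.choose (s-1) k * Nat.choose (3*s) ((K-1)-k)) := by ring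
  calc ∑ k ∈ range K, (k+1) * (Nat.choose s (k+1) * Nat.choose (3*s) (K-(k+1)))
      = ∑ k ∈ range K, s * (Nat.choose (s-1) k * Nat.choose (3*s) ((K-1)-k)) :=
        Finset.sum_congr rfl (fun k _ => step k)
    _ = s * ∑ k ∈ range K, Nat.choose (s-1) k * Nat.choose (3*s) ((K-1)-k) :=
        (Finset.mul_sum _ _ _).symm
    _ = s * Nat.choose (4*s-1) (K-1) := by
        congr 1
        have h := Nat.add_choose_eq (s-1) (3*s) (K-1)
        rw [Finset.Nat.sum_antidiagonal_eq_sum_range_succ_mk] at h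
        have e1 : (K - 1).succ = K := by omega
        have e2 : s - 1 + 3*s = 4*s - 1 := by omega
        rw [e1, e2] at h
        exact h.symm

lemma md_bsum (K : ℕ) :
    ∑ k ∈ range (K+1), ((Nat.choose K k : ℝ) * (1/4:ℝ)^k * (3/4:ℝ)^(K-k)) = 1 := by
  calc ∑ k ∈ range (K+1), ((Nat.choose K k : ℝ) * (1/4:ℝ)^k * (3/4:ℝ)^(K-k))
      = ∑ k ∈ range (K+1), ((1/4:ℝ)^k * (3/4:ℝ)^(K-k) * (Nat.choose K k : ℝ)) :=
        Finset.sum_congr rfl (fun k _ => by ring)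
    _ = ((1/4:ℝ) + (3/4:ℝ))^K := (add_pow (1/4:ℝ) (3/4) K).symm
    _ = 1 := by norm_num

lemma md_bmean (K : ℕ) (hK : 1 ≤ K) :
    ∑ k ∈ range (K+1), (k:ℝ) * ((Nat.choose K k : ℝ) * (1/4:ℝ)^k * (3/4:ℝ)^(K-k)) = (K:ℝ)/4 := by
  rw [Finset.sum_range_succ']
  simp only [Nat.cast_zero, zero_mul, add_zero]
  have step : ∀ k : ℕ, (((k:ℕ)+1 : ℕ):ℝ) * ((Nat.choose K (k+1) : ℝ) * (1/4:ℝ)^(k+1) * (3/4:ℝ)^(K-(k+1)))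
      = (K:ℝ)/4 * ((Nat.choose (K-1) k : ℝ) * (1/4:ℝ)^k * (3/4:ℝ)^((K-1)-k)) := by
    intro k
    have h1 : (K:ℝ) * (Nat.choose (K-1) k : ℝ) = (Nat.choose K (k+1) : ℝ) * ((k:ℝ)+1) := by
      have h0 := congrArg (Nat.cast : ℕ → ℝ) (Nat.add_one_mul_choose_eq (K-1) k)
      have hK1 : K-1+1 = K := by omega
      rw [hK1] at h0
      push_cast [Nat.succ_eq_add_one] at h0
      linarith
    have e : K - (k+1) = (K-1) - k := by omega
    rw [e, pow_succ]
    push_cast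
    linear_combination (-(1/4:ℝ)^k * (3/4:ℝ)^((K-1)-k) * (1/4)) * h1
  calc ∑ k ∈ range K, (((k:ℕ)+1 : ℕ):ℝ) * ((Nat.choose K (k+1) : ℝ) * (1/4:ℝ)^(k+1) * (3/4:ℝ)^(K-(k+1)))
      = ∑ k ∈ range K, (K:ℝ)/4 * ((Nat.choose (K-1) k : ℝ) * (1/4:ℝ)^k * (3/4:ℝ)^((K-1)-k)) :=
        Finset.sum_congr rfl (fun k _ => step k)
    _ = (K:ℝ)/4 * ∑ k ∈ range K, ((Nat.choose (K-1) k : ℝ) * (1/4:ℝ)^k * (3/4:ℝ)^((K-1)-k)) :=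
        (Finset.mul_sum _ _ _).symm
    _ = (K:ℝ)/4 := by
        have h2 := md_bsum (K-1)
        rw [show K - 1 + 1 = K by omega] at h2
        rw [h2, mul_one]

lemma md_abs (p : ℕ → ℝ) (K m : ℕ) (hm : (m:ℝ) ≤ (K:ℝ)/4) (hm2 : (K:ℝ)/4 < (m:ℝ)+1)
    (hmK : m ≤ K)
    (h1 : ∑ k ∈ range (K+1), p k = 1)
    (h2 : ∑ k ∈ range (K+1), (k:ℝ) * p k = (K:ℝ)/4) :
    ∑ k ∈ range (K+1), p k * |(k:ℝ) - (K:ℝ)/4|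
      = 2 * ∑ k ∈ range (m+1), p k * ((K:ℝ)/4 - k) := by
  have key : ∀ k : ℕ, p k * |(k:ℝ) - (K:ℝ)/4|
      = (p k * k - (K:ℝ)/4 * p k) + 2 * (if k ≤ m then p k * ((K:ℝ)/4 - k) else 0) := by
    intro k
    split_ifs with h
    · have hk : (k:ℝ) ≤ (K:ℝ)/4 := le_trans (by exact_mod_cast Nat.cast_le.mpr h) hm
      rw [abs_of_nonpos (by linarith)]
      ring
    · have hk : (K:ℝ)/4 < (k:ℝ) := by
        have : (m:ℝ) + 1 ≤ (k:ℝ) := by exact_mod_cast Nat.succ_le_of_lt (by omega)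
        linarith
      rw [abs_of_nonneg (by linarith)]
      ring
  calc ∑ k ∈ range (K+1), p k * |(k:ℝ) - (K:ℝ)/4|
      = ∑ k ∈ range (K+1), ((p k * k - (K:ℝ)/4 * p k)
          + 2 * (if k ≤ m then p k * ((K:ℝ)/4 - k) else 0)) :=
        Finset.sum_congr rfl (fun k _ => key k)
    _ = (∑ k ∈ range (K+1), (p k * k - (K:ℝ)/4 * p k))
          + 2 * ∑ k ∈ range (K+1), (if k ≤ m then p k * ((K:ℝ)/4 - k) else 0) := by
        rw [Finset.sum_add_distrib, Finset.mul_sum]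
    _ = 2 * ∑ k ∈ range (m+1), p k * ((K:ℝ)/4 - k) := by
        have e1 : ∑ k ∈ range (K+1), (p k * k - (K:ℝ)/4 * p k) = 0 := by
          rw [Finset.sum_sub_distrib, ← Finset.mul_sum, h1]
          have : ∑ k ∈ range (K+1), p k * (k:ℝ) = ∑ k ∈ range (K+1), (k:ℝ) * p k :=
            Finset.sum_congr rfl (fun k _ => by ring)
          rw [this, h2]; ring
        have e2 : ∑ k ∈ range (K+1), (if k ≤ m then p k * ((K:ℝ)/4 - k) else 0)
            = ∑ k ∈ range (m+1), p k * ((K:ℝ)/4 - k) := by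
          have hss := Finset.sum_subset (s₁ := range (m+1)) (s₂ := range (K+1))
            (f := fun k => if k ≤ m then p k * ((K:ℝ)/4 - k) else 0)
            (Finset.range_subset_range.mpr (by omega))
            (fun x _ hx => by simp only [Finset.mem_range] at hx; rw [if_neg (by omega)])
          rw [← hss]
          exact Finset.sum_congr rfl (fun k hk => by
            rw [if_pos (by simp at hk; omega)])
        rw [e1, e2]; ring

/-- The mean absolute deviation of a hypergeometric variable X (K draws without replacement
from a population of size n = 4s containing s = n/4 successes) is at most that of
Y ~ Binomial(K, 1/4). Both have mean K/4. -/
theorem stmt6 (s K : ℕ) (hs : 0 < s) (hK : K ≤ 4 * s) :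
    ∑ k ∈ Finset.range (K + 1),
        ((Nat.choose s k * Nat.choose (3 * s) (K - k) : ℝ) / (Nat.choose (4 * s) K : ℝ))
          * |(k : ℝ) - (K : ℝ) / 4|
    ≤ ∑ k ∈ Finset.range (K + 1),
        ((Nat.choose K k : ℝ) * (1 / 4 : ℝ) ^ k * (3 / 4 : ℝ) ^ (K - k))
          * |(k : ℝ) - (K : ℝ) / 4| := by
  rcases Nat.eq_zero_or_pos K with rfl | hK1
  · simp
  -- setup
  set m := K / 4 with hm
  have hmK : m ≤ K := by omega
  have hm1K : m + 1 ≤ K := by omega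
  have h4m : 4 * m ≤ K := by omega
  have h4m2 : K < 4 * (m + 1) := by omega
  have hmr : (m:ℝ) ≤ (K:ℝ)/4 := by
    have : ((4*m : ℕ):ℝ) ≤ ((K:ℕ):ℝ) := Nat.cast_le.mpr h4m
    push_cast at this; linarith
  have hmr2 : (K:ℝ)/4 < (m:ℝ)+1 := by
    have : ((K:ℕ):ℝ) < ((4*(m+1) : ℕ):ℝ) := Nat.cast_lt.mpr h4m2
    push_cast at this; linarith
  have hNpos : 0 < Nat.choose (4*s) K := Nat.choose_pos hK
  have hNr : (0:ℝ) < (Nat.choose (4*s) K : ℝ) := by exact_mod_cast hNpos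
  -- probability sums for hypergeometric weights
  have hp1 : ∑ k ∈ range (K+1),
      ((Nat.choose s k * Nat.choose (3*s) (K-k) : ℝ) / (Nat.choose (4*s) K : ℝ)) = 1 := by
    rw [← Finset.sum_div]
    rw [show ∑ k ∈ range (K+1), ((Nat.choose s k : ℝ) * (Nat.choose (3*s) (K-k) : ℝ))
        = ((∑ k ∈ range (K+1), Nat.choose s k * Nat.choose (3*s) (K-k) : ℕ) : ℝ) by push_cast; rfl]
    rw [md_hsum s K]
    exact div_self hNr.ne'
  have hp2 : ∑ k ∈ range (K+1), (k:ℝ) *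
      ((Nat.choose s k * Nat.choose (3*s) (K-k) : ℝ) / (Nat.choose (4*s) K : ℝ)) = (K:ℝ)/4 := by
    have e : ∑ k ∈ range (K+1), (k:ℝ) *
        ((Nat.choose s k * Nat.choose (3*s) (K-k) : ℝ) / (Nat.choose (4*s) K : ℝ))
        = ((∑ k ∈ range (K+1), k * (Nat.choose s k * Nat.choose (3*s) (K-k)) : ℕ) : ℝ)
          / (Nat.choose (4*s) K : ℝ) := by
      push_cast
      rw [Finset.sum_div]
      exact Finset.sum_congr rfl (fun k _ => by ring)
    rw [e, md_hmean s K hs hK1]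
    -- s * C(4s-1, K-1) / C(4s,K) = K/4  since 4s * C(4s-1,K-1) = K * C(4s,K)
    have hid : 4*s * Nat.choose (4*s-1) (K-1) = K * Nat.choose (4*s) K := by
      have h0 := Nat.add_one_mul_choose_eq (4*s-1) (K-1)
      have e1 : 4*s-1+1 = 4*s := by omega
      have e2 : K-1+1 = K := by omega
      rw [e1, e2] at h0
      rw [h0]; ring
    have hidr : 4*(s:ℝ) * (Nat.choose (4*s-1) (K-1) : ℝ) = (K:ℝ) * (Nat.choose (4*s) K : ℝ) := by
      exact_mod_cast congrArg (Nat.cast : ℕ → ℝ) hid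
    rw [div_eq_div_iff hNr.ne' (by norm_num : (4:ℝ) ≠ 0)]
    push_cast
    linear_combination hidr
  -- apply MAD reduction on both sides
  rw [md_abs (fun k => ((Nat.choose s k * Nat.choose (3*s) (K-k) : ℝ) / (Nat.choose (4*s) K : ℝ)))
    K m hmr hmr2 hmK hp1 hp2]
  rw [md_abs (fun k => ((Nat.choose K k : ℝ) * (1/4:ℝ)^k * (3/4:ℝ)^(K-k)))
    K m hmr hmr2 hmK (md_bsum K) (md_bmean K hK1)]
  -- reduce to closed forms
  have hL : ∑ k ∈ range (m+1),
      ((Nat.choose s k * Nat.choose (3*s) (K-k) : ℝ) / (Nat.choose (4*s) K : ℝ)) * ((K:ℝ)/4 - k)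
      = ((((m:ℝ)+1) * (3*(s:ℝ) - K + ((m:ℝ)+1)) / (4*(s:ℝ))) *
          ((Nat.choose s (m+1) : ℝ) * (Nat.choose (3*s) (K-(m+1)) : ℝ))) / (Nat.choose (4*s) K : ℝ) := by
    calc ∑ k ∈ range (m+1),
        ((Nat.choose s k * Nat.choose (3*s) (K-k) : ℝ) / (Nat.choose (4*s) K : ℝ)) * ((K:ℝ)/4 - k)
        = ∑ k ∈ range (m+1),
            (((Nat.choose s k : ℝ) * (Nat.choose (3*s) (K-k) : ℝ)) * ((K:ℝ)/4 - k))
              / (Nat.choose (4*s) K : ℝ) :=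
          Finset.sum_congr rfl (fun k _ => by ring)
      _ = (∑ k ∈ range (m+1),
            ((Nat.choose s k : ℝ) * (Nat.choose (3*s) (K-k) : ℝ)) * ((K:ℝ)/4 - k))
              / (Nat.choose (4*s) K : ℝ) := by rw [← Finset.sum_div]
      _ = _ := by rw [md_htel s K hs m hm1K]
  have hR := md_btel K m hm1K
  rw [hL, hR]
  -- final closed-form inequality
  set A := (Nat.choose s (m+1) : ℝ) with hA
  set B := (Nat.choose (3*s) (K-(m+1)) : ℝ) with hB
  set C3 := (Nat.choose (3*s-1) (K-(m+1)) : ℝ) with hC3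
  set CK := (Nat.choose K (m+1) : ℝ) with hCK
  set Nr := (Nat.choose (4*s) K : ℝ) with hNr'
  have hKj3s : K - (m+1) ≤ 3*s := by omega
  have natid : (3*s - (K-(m+1))) * Nat.choose (3*s) (K-(m+1))
      = 3*s * Nat.choose (3*s-1) (K-(m+1)) := by
    have u1 := Nat.choose_succ_right_eq (3*s) (K-(m+1))
    have u2 := Nat.add_one_mul_choose_eq (3*s-1) (K-(m+1))
    have e1 : 3*s-1+1 = 3*s := by omega
    rw [e1] at u2
    calc (3*s - (K-(m+1))) * Nat.choose (3*s) (K-(m+1))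
        = Nat.choose (3*s) (K-(m+1)) * (3*s - (K-(m+1))) := by ring
      _ = Nat.choose (3*s) ((K-(m+1))+1) * ((K-(m+1))+1) := u1.symm
      _ = (3*s) * Nat.choose (3*s-1) (K-(m+1)) := by
          rw [← u2]
  have er : (3*(s:ℝ) - K + ((m:ℝ)+1)) = ((3*s - (K-(m+1)) : ℕ) : ℝ) := by
    rw [Nat.cast_sub hKj3s, Nat.cast_sub hm1K]
    push_cast; ring
  have realid : (3*(s:ℝ) - K + ((m:ℝ)+1)) * B = 3*(s:ℝ) * C3 := by
    rw [er, hB, hC3]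
    exact_mod_cast congrArg (Nat.cast : ℕ → ℝ) natid
  have hABC : (3*(s:ℝ) - K + ((m:ℝ)+1)) * (A*B) = 3*(s:ℝ)*(A*C3) := by
    linear_combination A * realid
  have powid : (1/4:ℝ)^(m+1) * (3/4:ℝ)^(K-(m+1)) = (3:ℝ)^(K-(m+1)) / (4:ℝ)^K := by
    have h44 : (4:ℝ)^(m+1) * (4:ℝ)^(K-(m+1)) = (4:ℝ)^K := by
      rw [← pow_add]; congr 1; omega
    rw [div_pow, div_pow, one_pow, div_mul_div_comm, one_mul, h44]
  have ineqr : A * C3 * (4:ℝ)^K ≤ (3:ℝ)^(K-(m+1)) * (CK * Nr) := by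
    have h0 := md_chooseIneq s K (m+1) hs (by omega) hK1 hK
    rw [hA, hC3, hCK, hNr']
    exact_mod_cast h0
  have hNrpos : (0:ℝ) < Nr := hNr
  have h4Kpos : (0:ℝ) < (4:ℝ)^K := by positivity
  have LHSeq : ((((m:ℝ)+1) * (3*(s:ℝ) - K + ((m:ℝ)+1)) / (4*(s:ℝ))) * (A*B)) / Nr
      = (3*((m:ℝ)+1)*A*C3)/(4*Nr) := by
    have hsr : (0:ℝ) < (s:ℝ) := by exact_mod_cast hs
    calc ((((m:ℝ)+1) * (3*(s:ℝ) - K + ((m:ℝ)+1)) / (4*(s:ℝ))) * (A*B)) / Nr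
        = (((m:ℝ)+1) * ((3*(s:ℝ) - K + ((m:ℝ)+1)) * (A*B))) / (4*(s:ℝ)*Nr) := by
          rw [div_mul_eq_mul_div, div_div]; ring_nf
      _ = (((m:ℝ)+1) * (3*(s:ℝ)*(A*C3))) / (4*(s:ℝ)*Nr) := by rw [hABC]
      _ = (3*((m:ℝ)+1)*A*C3)/(4*Nr) := by
          rw [div_eq_div_iff (by positivity) (by positivity)]; ring
  rw [LHSeq]
  have RHSineq : (3*((m:ℝ)+1)*A*C3)/(4*Nr)
      ≤ 3/4*((m:ℝ)+1)*(CK*(1/4:ℝ)^(m+1)*(3/4:ℝ)^(K-(m+1))) := by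
    have RHSeq0 : 3/4*((m:ℝ)+1)*(CK*(1/4:ℝ)^(m+1)*(3/4:ℝ)^(K-(m+1)))
        = 3/4*((m:ℝ)+1)*(CK*((3:ℝ)^(K-(m+1))/(4:ℝ)^K)) := by
      linear_combination (3/4*((m:ℝ)+1)*CK) * powid
    rw [RHSeq0]
    have RHSeq : 3/4*((m:ℝ)+1)*(CK*((3:ℝ)^(K-(m+1))/(4:ℝ)^K))
        = (3*((m:ℝ)+1)*CK*(3:ℝ)^(K-(m+1)))/(4*(4:ℝ)^K) := by ring
    rw [RHSeq, div_le_div_iff₀ (by positivity) (by positivity)]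

    calc 3*((m:ℝ)+1)*A*C3*(4*(4:ℝ)^K) = (12*((m:ℝ)+1)) * (A*C3*(4:ℝ)^K) := by ring
      _ ≤ (12*((m:ℝ)+1)) * ((3:ℝ)^(K-(m+1)) * (CK*Nr)) := by
          apply mul_le_mul_of_nonneg_left ineqr (by positivity)
      _ = 3*((m:ℝ)+1)*CK*(3:ℝ)^(K-(m+1))*(4*Nr) := by ring
  linarith [RHSineq]
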